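/- Let (n_i)_{i≥1} be a sequence of positive integers with n_1 ≥ 2, define u_0 = ε and u_i = u_{i-1} a (u_{i-1} b)^{n_i} u_{i-1} over {a,b}, and let U = a_1 a_2 a_3 ⋯ be the infinite word having every u_i as a prefix. Set m_0 = 1 and m_j = n_j + 2 for j ≥ 1 (so that |u_j| + 1 = m_0 m_1 ⋯ m_j). Then for every i ≥ 1, a_i = a if and only if there exists j ≥ 0 such that i ≡ m_0 m_1 ⋯ m_j (mod m_0 m_1 ⋯ m_j m_{j+1}). -/

import Mathlib

open scoped BigOperators ENNReal

namespace PeriodicityComplexity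

variable {A : Type*}

/-- The finite word `z` occurs in the infinite word `w` at the (0-based) index `j`,
i.e. `z` occupies positions `j+1, …, j+|z|` of `w`. -/
def OccursAt (w : ℕ → A) (z : List A) (j : ℕ) : Prop :=
  z = List.ofFn (fun t : Fin z.length => w (j + t))

/-- `z` is a (finite) factor of the infinite word `w`. -/
def IsFactor (w : ℕ → A) (z : List A) : Prop := ∃ j, OccursAt w z j

/-- An infinite word is uniformly recurrent if every factor occurs with bounded gaps. -/
def UniformlyRecurrent (w : ℕ → A) : Prop :=
  ∀ z : List A, IsFactor w z → ∃ N : ℕ, ∀ j : ℕ, ∃ t, j ≤ t ∧ t < j + N ∧ OccursAt w z t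

/-- An infinite word is periodic if some `p ≥ 1` is a period of all of it. -/
def Periodic (w : ℕ → A) : Prop := ∃ p : ℕ, 1 ≤ p ∧ ∀ i, w (i + p) = w i

/-- An infinite word is ultimately periodic if some `p ≥ 1` is a period from some point on. -/
def UltimatelyPeriodic (w : ℕ → A) : Prop :=
  ∃ p : ℕ, 1 ≤ p ∧ ∃ N : ℕ, ∀ i, N ≤ i → w (i + p) = w i

/-- The `e`-fold concatenation `v^e` of a finite word `v`. -/
def wpow (v : List A) (e : ℕ) : List A := (List.replicate e v).flatten

/-- The prefix of length `i` of an infinite word. -/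
def wordPrefix (w : ℕ → A) (i : ℕ) : List A := List.ofFn (fun t : Fin i => w t)

/-- `r` is a repetition word at position `i` of the infinite word `w` (`w = uv`, `|u| = i`):
`r` is nonempty, suffix-comparable with `u`, and a prefix of the infinite remainder `v`. -/
def IsRepWordAt (w : ℕ → A) (i : ℕ) (r : List A) : Prop :=
  r ≠ [] ∧ (r <:+ wordPrefix w i ∨ wordPrefix w i <:+ r) ∧ OccursAt w r i

/-- Local period of an infinite word at position `i`, as an extended nonnegative real
(`⊤` if there is no repetition word at that position). -/
noncomputable def localPeriod (w : ℕ → A) (i : ℕ) : ℝ≥0∞ :=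
  sInf ((fun r : List A => (r.length : ℝ≥0∞)) '' {r | IsRepWordAt w i r})

/-- Periodicity complexity `h_w(i) = (1/i) ∑_{j=1}^{i} p_w(j)` of an infinite word. -/
noncomputable def pcomplexity (w : ℕ → A) (i : ℕ) : ℝ≥0∞ :=
  (∑ j ∈ Finset.Icc 1 i, localPeriod w j) / (i : ℝ≥0∞)

/-- `r` is a repetition word at position `i` of the finite word `v` (`v = xy`, `|x| = i`):
`r` is nonempty, suffix-comparable with `x` and prefix-comparable with `y`. -/
def IsRepWordAtF (v : List A) (i : ℕ) (r : List A) : Prop :=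
  r ≠ [] ∧ (r <:+ v.take i ∨ v.take i <:+ r) ∧ (r <+: v.drop i ∨ v.drop i <+: r)

/-- Local period of a finite word at position `i`. -/
noncomputable def localPeriodF (v : List A) (i : ℕ) : ℕ :=
  sInf {n : ℕ | ∃ r : List A, IsRepWordAtF v i r ∧ r.length = n}

/-- Average local period `h(v) = (1/|v|) ∑_{i=1}^{|v|} p_v(i)` of a finite word. -/
noncomputable def hF (v : List A) : ℝ :=
  (∑ i ∈ Finset.Icc 1 v.length, (localPeriodF v i : ℝ)) / (v.length : ℝ)

/-- An infinite word is of bounded repetition if the exponents of powers of nonempty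
words occurring in it are bounded. -/
def BoundedRepetition (w : ℕ → A) : Prop :=
  ∃ E : ℕ, ∀ (v : List A) (e : ℕ), v ≠ [] → IsFactor w (wpow v e) → e ≤ E

/-- `p` is a period of the finite word `z`. -/
def HasPeriodF (z : List A) (p : ℕ) : Prop :=
  ∀ t : ℕ, t + p < z.length → z[t]? = z[t + p]?

/-- The (least) period of a finite word. -/
noncomputable def periodF (z : List A) : ℕ := sInf {p : ℕ | 1 ≤ p ∧ HasPeriodF z p}

/-- `r` is a return word to `z` in the infinite word `w`: `r` is the factor of `w` between
two consecutive occurrences of `z`. -/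
def IsReturnWord (w : ℕ → A) (z r : List A) : Prop :=
  r ≠ [] ∧ ∃ j : ℕ, OccursAt w z j ∧ OccursAt w z (j + r.length) ∧
    (∀ t, j < t → t < j + r.length → ¬ OccursAt w z t) ∧ OccursAt w r j

/-- `l` is the length of some return word to `z` in `w`. -/
def IsReturnLength (w : ℕ → A) (z : List A) (l : ℕ) : Prop :=
  ∃ r : List A, IsReturnWord w z r ∧ r.length = l

/-- The maximal return time of `z` in `w`. -/
noncomputable def maxReturnTime (w : ℕ → A) (z : List A) : ℕ :=
  sSup {l : ℕ | IsReturnLength w z l}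

/-- A finite word is unbordered if no proper nonempty prefix of it is also a suffix. -/
def Unbordered (z : List A) : Prop :=
  ∀ b : List A, b ≠ [] → b.length < z.length → b <+: z → ¬ b <:+ z

/-- A finite word is primitive if it is not a (trivial or nontrivial) power of a word
other than itself. -/
def Primitive (z : List A) : Prop :=
  ∀ (v : List A) (k : ℕ), z = wpow v k → k = 1

/-- A finite word is Lyndon if it is primitive and lexicographically minimal among its
conjugates: `z ≤ yx` for every factorization `z = xy`. -/
def IsLyndon [LinearOrder A] (z : List A) : Prop :=
  Primitive z ∧ ∀ x y : List A, z = x ++ y → z ≤ y ++ x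

end PeriodicityComplexity

namespace PeriodicityComplexity

variable {A : Type*}

/-- The words `u_0 = ε`, `u_i = u_{i-1} a (u_{i-1} b)^{n_i} u_{i-1}` of the generalized
Toeplitz construction. -/
def uSeq (a b : A) (nseq : ℕ → ℕ) : ℕ → List A
  | 0 => []
  | i + 1 =>
      uSeq a b nseq i ++ [a] ++ wpow (uSeq a b nseq i ++ [b]) (nseq (i + 1)) ++ uSeq a b nseq i

end PeriodicityComplexity

open PeriodicityComplexity

namespace ToeplitzAux
open PeriodicityComplexity Finset

variable {A : Type*}

/-- product `m_0 ⋯ m_j`. -/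
def Pm (m : ℕ → ℕ) (j : ℕ) : ℕ := ∏ t ∈ Finset.range (j+1), m t

/-- The letter condition. -/
def C (m : ℕ → ℕ) (i : ℕ) : Prop := ∃ j, i % Pm m (j+1) = Pm m j

open Classical in
noncomputable def fL (a b : A) (m : ℕ → ℕ) (t : ℕ) : A := if C m (t+1) then a else b

lemma Pm_succ (m : ℕ → ℕ) (j : ℕ) : Pm m (j+1) = Pm m j * m (j+1) :=
  Finset.prod_range_succ m (j+1)

variable {m : ℕ → ℕ} (hm0 : m 0 = 1) (hmge : ∀ j, 1 ≤ j → 2 ≤ m j)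

include hm0 hmge

lemma Pm_pos : ∀ j, 0 < Pm m j := by
  intro j
  induction j with
  | zero => simp [Pm, hm0]
  | succ j ih => rw [Pm_succ]; exact Nat.mul_pos ih (by have := hmge (j+1) (by omega); omega)

lemma Pm_lt_succ (j : ℕ) : Pm m j < Pm m (j+1) := by
  rw [Pm_succ]
  have h1 := Pm_pos hm0 hmge j
  have h2 := hmge (j+1) (by omega)
  nlinarith

lemma Pm_strictMono : StrictMono (Pm m) :=
  strictMono_nat_of_lt_succ (Pm_lt_succ hm0 hmge)

lemma Pm_dvd {j J : ℕ} (h : j ≤ J) : Pm m j ∣ Pm m J :=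
  Finset.prod_dvd_prod_of_subset _ _ m (Finset.range_subset_range.2 (by omega))

lemma Pm_gt_self : ∀ J, J < Pm m J := by
  intro J
  induction J with
  | zero => simpa [Pm, hm0] using Nat.zero_lt_one
  | succ J ih =>
    have := Pm_lt_succ hm0 hmge J
    omega

lemma level_lt {i j J : ℕ} (h : i % Pm m (j+1) = Pm m j) (hi : i < Pm m (J+1))
    (hnd : ¬ (Pm m J ∣ i)) : j < J := by
  by_contra hc
  push_neg at hc
  rcases lt_or_ge i (Pm m (j+1)) with h1 | h1
  · rw [Nat.mod_eq_of_lt h1] at h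
    exact hnd (h ▸ Pm_dvd hm0 hmge hc)
  · have := (Pm_strictMono hm0 hmge).lt_iff_lt.mp (lt_of_le_of_lt h1 hi)
    omega

lemma condA {J i i' : ℕ} (hcong : i % Pm m J = i' % Pm m J) (h1 : 1 ≤ i')
    (h2 : i' < Pm m J) (h3 : i < Pm m (J+1)) : C m i ↔ C m i' := by
  have hi' : i' % Pm m J = i' := Nat.mod_eq_of_lt h2
  have hndi : ¬ (Pm m J ∣ i) := by
    rw [Nat.dvd_iff_mod_eq_zero, hcong, hi']; omega
  have hndi' : ¬ (Pm m J ∣ i') := by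
    rw [Nat.dvd_iff_mod_eq_zero, hi']; omega
  have hcong' : i ≡ i' [MOD Pm m J] := by rwa [Nat.ModEq]
  constructor
  · rintro ⟨j, hj⟩
    have hjJ : j < J := level_lt hm0 hmge hj h3 hndi
    have hd : Pm m (j+1) ∣ Pm m J := Pm_dvd hm0 hmge (by omega)
    exact ⟨j, by rw [← (hcong'.of_dvd hd), hj]⟩
  · rintro ⟨j, hj⟩
    have hjJ : j < J := level_lt hm0 hmge hj (lt_trans h2 (Pm_lt_succ hm0 hmge J)) hndi'
    have hd : Pm m (j+1) ∣ Pm m J := Pm_dvd hm0 hmge (by omega)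
    exact ⟨j, by rw [hcong'.of_dvd hd, hj]⟩

lemma condB {J q : ℕ} (hq : q + 1 < m (J+1)) : C m ((q+1) * Pm m J) ↔ q = 0 := by
  have hP := Pm_pos hm0 hmge J
  have hlt : (q+1) * Pm m J < Pm m (J+1) := by
    rw [Pm_succ, mul_comm (Pm m J)]
    exact (Nat.mul_lt_mul_right hP).mpr hq
  constructor
  · rintro ⟨j, hj⟩
    rcases lt_trichotomy j J with h | h | h
    · have hd : Pm m (j+1) ∣ (q+1) * Pm m J :=
        dvd_mul_of_dvd_right (Pm_dvd hm0 hmge (by omega)) _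
      have h0 : (q+1) * Pm m J % Pm m (j+1) = 0 := (Nat.mod_eq_zero_of_dvd hd)
      have hp := Pm_pos hm0 hmge j
      omega
    · subst h
      rw [Nat.mod_eq_of_lt hlt] at hj
      nlinarith
    · have h1 : Pm m (J+1) ≤ Pm m j := (Pm_strictMono hm0 hmge).le_iff_le.mpr (by omega)
      have h2 : Pm m j < Pm m (j+1) := Pm_lt_succ hm0 hmge j
      rw [Nat.mod_eq_of_lt (by omega)] at hj
      omega
  · rintro rfl
    refine ⟨J, ?_⟩
    simpa using Nat.mod_eq_of_lt (Pm_lt_succ hm0 hmge J)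

omit hm0 hmge

lemma wpow_succ (v : List A) (e : ℕ) : wpow v (e+1) = v ++ wpow v e := by
  simp [wpow, List.replicate_succ]

lemma wpow_succ' (v : List A) (e : ℕ) : wpow v (e+1) = wpow v e ++ v := by
  simp [wpow, List.replicate_succ']

lemma wpow_length (v : List A) (e : ℕ) : (wpow v e).length = e * v.length := by
  induction e with
  | zero => simp [wpow]
  | succ e ih => rw [wpow_succ]; simp [ih]; ring

lemma wpow_getElem? (v : List A) : ∀ (e t : ℕ), t < e * v.length →
    (wpow v e)[t]? = v[t % v.length]? := by
  intro e
  induction e with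
  | zero => omega
  | succ e ih =>
    intro t ht
    have hv : 0 < v.length := by by_contra h; simp at h; simp [h] at ht
    rw [wpow_succ]
    by_cases h : t < v.length
    · rw [List.getElem?_append_left h, Nat.mod_eq_of_lt h]
    · push_neg at h
      obtain ⟨s, rfl⟩ : ∃ s, t = v.length + s := ⟨t - v.length, by omega⟩
      rw [List.getElem?_append_right h, Nat.add_sub_cancel_left, Nat.add_mod_left]
      exact ih s (by nlinarith)

include hm0 hmge

variable {nseq : ℕ → ℕ} (hm : ∀ j, 1 ≤ j → m j = nseq j + 2)

include hm

lemma uSeq_length (a b : A) : ∀ J, (uSeq a b nseq J).length + 1 = Pm m J := by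
  intro J
  induction J with
  | zero => simp [uSeq, Pm, hm0]
  | succ J ih =>
    have hmJ : m (J+1) = nseq (J+1) + 2 := hm (J+1) (by omega)
    simp only [uSeq, List.length_append, List.length_cons, List.length_nil,
      wpow_length, Pm_succ, ← ih, hmJ]
    ring

lemma uSeq_getElem (a b : A) : ∀ J t, t < (uSeq a b nseq J).length →
    (uSeq a b nseq J)[t]? = some (fL a b m t) := by
  intro J
  induction J with
  | zero => intro t ht; simp [uSeq] at ht
  | succ J ih =>
    intro t ht
    set u := uSeq a b nseq J with hu
    set L := u.length with hL
    set P := L + 1 with hPdef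
    have hPm : P = Pm m J := uSeq_length hm0 hmge hm a b J
    have hmJ : m (J+1) = nseq (J+1) + 2 := hm (J+1) (by omega)
    set e := nseq (J+1) with he
    have hPpos : 0 < P := by omega
    have hlen : (uSeq a b nseq (J+1)).length + 1 = P * m (J+1) := by
      rw [uSeq_length hm0 hmge hm a b (J+1), Pm_succ, hPm]
    have hlen' : (uSeq a b nseq (J+1)).length + 1 = (e+1) * P + P := by
      rw [hlen, hmJ]; ring
    have hlena : (u ++ [a]).length = P := by simp [hPdef, hL]
    have hlenb : (u ++ [b]).length = P := by simp [hPdef, hL]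
    have hstruct : uSeq a b nseq (J+1) ++ [b] = (u ++ [a]) ++ wpow (u ++ [b]) (e+1) := by
      show (u ++ [a] ++ wpow (u ++ [b]) e ++ u) ++ [b] = _
      rw [wpow_succ']
      simp [List.append_assoc]
    have hget : (uSeq a b nseq (J+1))[t]? = ((u ++ [a]) ++ wpow (u ++ [b]) (e+1))[t]? := by
      rw [← hstruct, List.getElem?_append_left ht]
    have hCP : C m P := ⟨J, by rw [← hPm, Nat.mod_eq_of_lt (hPm ▸ Pm_lt_succ hm0 hmge J)]⟩
    by_cases hq0 : t < P
    · rw [hget, List.getElem?_append_left (hlena ▸ hq0)]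
      by_cases hrL : t < L
      · rw [List.getElem?_append_left hrL]
        exact ih t hrL
      · have htL : t = L := by omega
        rw [htL, show (u ++ [a])[L]? = some a from by simp [hL]]
        have hCt : C m (L + 1) := by rwa [hPdef] at hCP
        simp [fL, hCt]
    · push_neg at hq0
      obtain ⟨s, rfl⟩ : ∃ s, t = P + s := ⟨t - P, by omega⟩
      have hts : P + s < (uSeq a b nseq (J+1)).length := ht
      rw [hget, List.getElem?_append_right (by omega : (u ++ [a]).length ≤ P + s),
        hlena, Nat.add_sub_cancel_left,
        wpow_getElem? (u ++ [b]) (e+1) s (by rw [hlenb]; omega), hlenb]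
      set k := s / P with hk
      have hsk : P * k + s % P = s := Nat.div_add_mod s P
      set r := s % P with hr
      have hrP : r < P := Nat.mod_lt _ hPpos
      have h3 : P + s + 1 < P * m (J+1) := by omega
      have h3' : P + s + 1 < Pm m (J+1) := by rwa [Pm_succ, ← hPm]
      by_cases hrL : r < L
      · rw [List.getElem?_append_left hrL, ih r hrL]
        congr 1
        have hcong : (P + s + 1) % Pm m J = (r + 1) % Pm m J := by
          have hd : P * (k+1) = P * k + P := by ring
          rw [← hPm, show P + s + 1 = P * (k+1) + (r+1) from by omega, Nat.mul_add_mod]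
        have hA : C m (P + s + 1) ↔ C m (r + 1) :=
          condA hm0 hmge hcong (by omega) (by omega) h3'
        simp only [fL]
        by_cases hc : C m (r+1)
        · rw [if_pos hc, if_pos (hA.mpr hc)]
        · rw [if_neg hc, if_neg (fun h => hc (hA.mp h))]
      · have hrLe : r = L := by omega
        rw [hrLe, show (u ++ [b])[L]? = some b from by simp [hL]]
        have hexp : (k+1+1) * P = P * k + 2 * P := by ring
        have hx : (k+1+1) * P = P + s + 1 := by omega
        have hq2 : k + 1 + 1 < m (J+1) := by
          have hy : (k+1+1) * P < m (J+1) * P := by rw [hx, mul_comm]; exact h3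
          exact lt_of_mul_lt_mul_right hy (Nat.zero_le P)
        have hB : C m ((k+1+1) * Pm m J) ↔ k + 1 = 0 := condB hm0 hmge hq2
        have hnot : ¬ C m (P + s + 1) := by
          rw [show P + s + 1 = (k+1+1) * Pm m J from by rw [← hPm]; omega]
          simp [hB]
        simp [fL, hnot]

end ToeplitzAux

open PeriodicityComplexity

/-- In the generalized Toeplitz construction, with `m_0 = 1` and
`m_j = n_j + 2` for `j ≥ 1`, the `i`-th letter of `U` (for `i ≥ 1`) equals `a` if and only
if `i ≡ m_0 m_1 ⋯ m_j (mod m_0 m_1 ⋯ m_j m_{j+1})` for some `j ≥ 0`. -/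
theorem toeplitz_letter_formula
    {A : Type*} (a b : A) (hab : a ≠ b)
    (nseq : ℕ → ℕ) (hpos : ∀ i, 1 ≤ i → 1 ≤ nseq i) (hn1 : 2 ≤ nseq 1)
    (U : ℕ → A) (hU : ∀ i : ℕ, OccursAt U (uSeq a b nseq i) 0)
    (m : ℕ → ℕ) (hm0 : m 0 = 1) (hm : ∀ j, 1 ≤ j → m j = nseq j + 2) :
    ∀ i : ℕ, 1 ≤ i →
      (U (i - 1) = a ↔
        ∃ j : ℕ, i ≡ (∏ t ∈ Finset.range (j + 1), m t) [MOD (∏ t ∈ Finset.range (j + 2), m t)]) := by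
  intro i hi
  have hmge : ∀ j, 1 ≤ j → 2 ≤ m j := fun j hj => by
    rw [hm j hj]; have := hpos j hj; omega
  have hlen := ToeplitzAux.uSeq_length hm0 hmge hm a b i
  have hgt := ToeplitzAux.Pm_gt_self hm0 hmge i
  have hi1 : i - 1 < (uSeq a b nseq i).length := by omega
  have hofn := hU i
  rw [OccursAt] at hofn
  have hval : (uSeq a b nseq i)[i-1]? = some (U (i-1)) := by
    conv_lhs => rw [hofn]
    rw [List.getElem?_ofFn, dif_pos hi1]
    simp
  have hval2 := ToeplitzAux.uSeq_getElem hm0 hmge hm a b i (i-1) hi1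
  have hUf : U (i-1) = ToeplitzAux.fL a b m (i-1) := by
    have h := hval.symm.trans hval2
    exact Option.some_injective _ h
  have hCiff : ToeplitzAux.C m (i-1+1) ↔ ∃ j : ℕ,
      i ≡ (∏ t ∈ Finset.range (j + 1), m t) [MOD (∏ t ∈ Finset.range (j + 2), m t)] := by
    rw [show i - 1 + 1 = i from by omega]
    constructor
    · rintro ⟨j, hj⟩
      refine ⟨j, ?_⟩
      show i % ToeplitzAux.Pm m (j+1) = ToeplitzAux.Pm m j % ToeplitzAux.Pm m (j+1)
      rw [Nat.mod_eq_of_lt (ToeplitzAux.Pm_lt_succ hm0 hmge j), hj]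
    · rintro ⟨j, hj⟩
      refine ⟨j, ?_⟩
      have hj' : i % ToeplitzAux.Pm m (j+1) = ToeplitzAux.Pm m j % ToeplitzAux.Pm m (j+1) := hj
      rw [hj', Nat.mod_eq_of_lt (ToeplitzAux.Pm_lt_succ hm0 hmge j)]
  rw [hUf]
  unfold ToeplitzAux.fL
  by_cases hc : ToeplitzAux.C m (i - 1 + 1)
  · rw [if_pos hc]
    exact iff_of_true rfl (hCiff.mp hc)
  · rw [if_neg hc]
    exact iff_of_false (Ne.symm hab) (fun h => hc (hCiff.mpr h))
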